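/- Let (Σ,σ) be a transitive countable Markov shift with finite topological entropy and let φ : Σ → ℝ be a bounded potential of summable variations such that lim_{n→∞} sup_{x ∈ [n]} |φ(x)| = 0. Then the Gurevich pressure satisfies P_G(φ) ≥ δ_∞, the topological entropy at infinity of (Σ,σ). -/

import Mathlib

open Filter MeasureTheory Set Topology
open scoped ENNReal NNReal

namespace CMSPaper

/-- The countable Markov shift over alphabet `ℕ` with transition matrix `Mtr`. -/
abbrev Shift (Mtr : ℕ → ℕ → Prop) := {x : ℕ → ℕ // ∀ i, Mtr (x i) (x (i + 1))}

variable (Mtr : ℕ → ℕ → Prop)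

/-- The shift map. -/
def shiftMap (x : Shift Mtr) : Shift Mtr := ⟨fun i => x.val (i + 1), fun i => x.prop (i + 1)⟩

/-- The cylinder determined by a finite word `w`. -/
def cylF {n : ℕ} (w : Fin n → ℕ) : Set (Shift Mtr) := {x | ∀ i : Fin n, x.val i = w i}

/-- `C` is a (nonempty-length) cylinder set. -/
def IsCylinder (C : Set (Shift Mtr)) : Prop := ∃ (n : ℕ) (w : Fin (n + 1) → ℕ), C = cylF Mtr w

/-- The cylinder of length `n` containing `x`. -/
def cylOf (x : Shift Mtr) (n : ℕ) : Set (Shift Mtr) := {y | ∀ i < n, y.val i = x.val i}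

/-- Topological transitivity: any two realized symbols are connected by an admissible word. -/
def IsTransitive : Prop :=
  ∀ a b : ℕ, (∃ x : Shift Mtr, x.val 0 = a) → (∃ x : Shift Mtr, x.val 0 = b) →
    ∃ (x : Shift Mtr) (n : ℕ), 0 < n ∧ x.val 0 = a ∧ x.val n = b

/-- The entropy of a countable partition (indexed family) with respect to `μ`. -/
noncomputable def partEnt {X : Type*} [MeasurableSpace X] (μ : Measure X)
    {ι : Type*} (β : ι → Set X) : ℝ≥0∞ :=
  ∑' i, ENNReal.ofReal (Real.negMulLog ((μ (β i)).toReal))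

/-- The dynamical refinement `β ∨ T⁻¹β ∨ ⋯ ∨ T⁻⁽ⁿ⁻¹⁾β` of a partition. -/
def refinedPart {X : Type*} (T : X → X) (β : ℕ → Set X) (n : ℕ) : (Fin n → ℕ) → Set X :=
  fun w => {x | ∀ k : Fin n, T^[(k : ℕ)] x ∈ β (w k)}

/-- The entropy of `μ` with respect to the partition `β`. -/
noncomputable def entOfPart {X : Type*} [MeasurableSpace X] (T : X → X) (μ : Measure X)
    (β : ℕ → Set X) : ℝ≥0∞ :=
  atTop.liminf fun n => partEnt μ (refinedPart T β n) / (n : ℝ≥0∞)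

/-- Kolmogorov–Sinai entropy: supremum over countable measurable partitions of finite entropy. -/
noncomputable def ksEntropy {X : Type*} [MeasurableSpace X] (T : X → X) (μ : Measure X) : ℝ≥0∞ :=
  ⨆ (β : ℕ → Set X) (_ : ∀ i, MeasurableSet (β i)) (_ : Pairwise (Function.onFun Disjoint β))
    (_ : μ (⋃ i, β i)ᶜ = 0) (_ : partEnt μ β ≠ ⊤), entOfPart T μ β

/-- Exponential growth rate (`limsup (1/n) log uₙ`), valued in `EReal`. -/
noncomputable def growthSup (u : ℕ → ℝ≥0∞) : EReal :=
  atTop.limsup fun n : ℕ => (((n : ℝ)⁻¹ : ℝ) : EReal) * ENNReal.log (u n)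

/-- The number `z_n(M,q)` of cylinders `[x₀,…,x_{n+1}]` with `x₀ ≤ q`, `x_{n+1} ≤ q` and at most
`(n+2)/M` coordinates `≤ q`. -/
noncomputable def zCount (q M n : ℕ) : ℝ≥0∞ :=
  ({w : Fin (n + 2) → ℕ | (∃ x : Shift Mtr, ∀ i : Fin (n + 2), x.val i = w i) ∧
    w 0 ≤ q ∧ w (Fin.last (n + 1)) ≤ q ∧
    M * ({i : Fin (n + 2) | w i ≤ q}).ncard ≤ n + 2}.encard : ℕ∞)

/-- `δ_∞(M,q)`. -/
noncomputable def deltaMQ (M q : ℕ) : EReal := growthSup fun n => zCount Mtr q M n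

/-- The topological entropy at infinity `δ_∞ = inf_{M,q} δ_∞(M,q)`. -/
noncomputable def deltaInf : EReal := ⨅ (M : ℕ) (q : ℕ), deltaMQ Mtr M q

/-- Number of periodic points of period `n` starting with symbol `a`. -/
noncomputable def perCount (a n : ℕ) : ℝ≥0∞ :=
  ({x : Shift Mtr | (shiftMap Mtr)^[n] x = x ∧ x.val 0 = a}.encard : ℕ∞)

/-- Gurevich entropy computed at the symbol `a`. -/
noncomputable def gurevichEntropy (a : ℕ) : EReal := growthSup (perCount Mtr a)

/-- The topological (Gurevich) entropy. -/
noncomputable def topEnt : EReal := ⨆ a : ℕ, gurevichEntropy Mtr a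

/-- Birkhoff sum. -/
noncomputable def birk (φ : Shift Mtr → ℝ) (n : ℕ) (x : Shift Mtr) : ℝ :=
  ∑ k ∈ Finset.range n, φ ((shiftMap Mtr)^[k] x)

/-- Gurevich partition function `Z_n(φ,a)`. -/
noncomputable def Zab (φ : Shift Mtr → ℝ) (a n : ℕ) : ℝ≥0∞ :=
  ∑' x : {x : Shift Mtr // (shiftMap Mtr)^[n] x = x ∧ x.val 0 = a},
    ENNReal.ofReal (Real.exp (birk Mtr φ n x.val))

/-- Gurevich pressure computed at the symbol `a`. -/
noncomputable def pressure (φ : Shift Mtr → ℝ) (a : ℕ) : EReal :=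
  atTop.limsup fun n : ℕ => (((n : ℝ)⁻¹ : ℝ) : EReal) * ENNReal.log (Zab Mtr φ a n)

/-- `var_n(φ)`. -/
noncomputable def varn (φ : Shift Mtr → ℝ) (n : ℕ) : ℝ :=
  sSup {r : ℝ | ∃ x y : Shift Mtr, (∀ i < n, x.val i = y.val i) ∧ r = |φ x - φ y|}

/-- `φ` has summable variations. -/
def SummableVars (φ : Shift Mtr → ℝ) : Prop := Summable fun n : ℕ => varn Mtr φ (n + 2)

/-- Convergence on cylinders of a sequence of measures to a measure. -/
def CylTendsto (μ : ℕ → Measure (Shift Mtr)) (ν : Measure (Shift Mtr)) : Prop :=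
  ∀ (n : ℕ) (w : Fin (n + 1) → ℕ),
    Tendsto (fun k => μ k (cylF Mtr w)) atTop (𝓝 (ν (cylF Mtr w)))

/-- The measure-theoretic entropy at infinity `h_∞`. -/
noncomputable def hInfty : EReal :=
  sSup {h : EReal | ∃ μ : ℕ → Measure (Shift Mtr),
    (∀ n, IsProbabilityMeasure (μ n)) ∧ (∀ n, (μ n).map (shiftMap Mtr) = μ n) ∧
    CylTendsto Mtr μ 0 ∧
    h = atTop.limsup fun n : ℕ => (ksEntropy (shiftMap Mtr) (μ n) : EReal)}

/-- Minimal number of length-`n` cylinders covering a set of `μ`-measure at least `1 - δ`. -/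
noncomputable def coverCount [MeasurableSpace (Shift Mtr)] (μ : Measure (Shift Mtr)) (n : ℕ)
    (δ : ℝ) : ℝ≥0∞ :=
  ⨅ (F : Finset (Fin n → ℕ))
    (_ : 1 - ENNReal.ofReal δ ≤ μ (⋃ w ∈ F, cylF Mtr w)), (F.card : ℝ≥0∞)

/-- The F-property. -/
def FProp : Prop :=
  ∀ (a n : ℕ), {w : Fin (n + 1) → ℕ |
    (∀ i : Fin n, Mtr (w i.castSucc) (w i.succ)) ∧ w 0 = a ∧ w (Fin.last n) = a}.Finite


lemma iterate_val (k : ℕ) (x : Shift Mtr) (i : ℕ) :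
    ((shiftMap Mtr)^[k] x).val i = x.val (i + k) := by
  induction k generalizing x with
  | zero => rfl
  | succ k ih =>
    rw [Function.iterate_succ_apply, ih]
    show x.val (i + k + 1) = x.val (i + (k + 1))
    rw [Nat.add_assoc]

lemma encard_biUnion_le' {α ι : Type*} (F : Finset ι) (f : ι → Set α) :
    (((⋃ i ∈ F, f i).encard : ℕ∞) : ℝ≥0∞) ≤ ∑ i ∈ F, (((f i).encard : ℕ∞) : ℝ≥0∞) := by
  classical
  induction F using Finset.induction_on with
  | empty => simp
  | insert _ _ hni ih =>
    rename_i b s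
    rw [Finset.sum_insert hni]
    have hu : (⋃ i ∈ insert b s, f i) = f b ∪ ⋃ i ∈ s, f i := by
      simp [Set.biUnion_insert]
    refine le_trans ?_ (add_le_add_right ih _)
    rw [hu, ← ENat.toENNReal_add]
    exact ENat.toENNReal_le.mpr (Set.encard_union_le _ _)

lemma encard_mul_le_tsum {α β : Type*} (s : Set α) (g : β → ℝ≥0∞) (c : ℝ≥0∞)
    (F : s → β) (hinj : Function.Injective F) (hle : ∀ w, c ≤ g (F w)) :
    (s.encard : ℝ≥0∞) * c ≤ ∑' b, g b := by
  calc (s.encard : ℝ≥0∞) * c = ∑' _ : s, c := by rw [ENNReal.tsum_set_const]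
  _ ≤ ∑' w : s, g (F w) := ENNReal.tsum_le_tsum hle
  _ ≤ ∑' b, g b := ENNReal.tsum_comp_le_tsum_of_injective hinj g

lemma glue {a n j k m : ℕ} (hj : 0 < j) (hk : 0 < k)
    (hmeq : m = n + 1 + j + k)
    (X1 X2 x : Shift Mtr)
    (hX1a : X1.val 0 = a) (hX1b : X1.val j = x.val 0)
    (hX2b : X2.val 0 = x.val (n + 1)) (hX2a : X2.val k = a) :
    ∃ p : Shift Mtr, (shiftMap Mtr)^[m] p = p ∧
      ∀ i, i < m → p.val i =
        if i < j then X1.val i else if i < j + n + 2 then x.val (i - j)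
        else X2.val (i - (j + n + 1)) := by
  have hm0 : 0 < m := by omega
  set P : ℕ → ℕ := fun i => if i < j then X1.val i else if i < j + n + 2 then x.val (i - j)
    else X2.val (i - (j + n + 1)) with hP
  have hstep : ∀ r, r < m → Mtr (P r) (P ((r + 1) % m)) := by
    intro r hr
    by_cases he : r + 1 = m
    · have h1 : (r + 1) % m = 0 := by rw [he, Nat.mod_self]
      have hP0 : P 0 = X2.val k := by
        simp only [hP]; rw [if_pos hj, hX1a, ← hX2a]
      rw [h1, hP0]
      by_cases hk1 : k = 1
      · have hr' : P r = X2.val 0 := by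
          simp only [hP]
          rw [if_neg (by omega), if_pos (by omega), show r - j = n + 1 by omega, ← hX2b]
        rw [hr', hk1]
        exact X2.prop 0
      · have hr' : P r = X2.val (k - 1) := by
          simp only [hP]
          rw [if_neg (by omega), if_neg (by omega), show r - (j + n + 1) = k - 1 by omega]
        rw [hr']
        have h2 := X2.prop (k - 1)
        rwa [Nat.sub_add_cancel hk] at h2
    · have hlt : r + 1 < m := by omega
      have h1 : (r + 1) % m = r + 1 := Nat.mod_eq_of_lt hlt
      rw [h1]
      rcases lt_or_ge r j with hcase | hcase
      · have hPr : P r = X1.val r := if_pos hcase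
        have hPr1 : P (r + 1) = X1.val (r + 1) := by
          by_cases h : r + 1 < j
          · exact if_pos h
          · have h' : r + 1 = j := by omega
            simp only [hP]
            rw [if_neg (by omega), if_pos (by omega), show r + 1 - j = 0 by omega, ← hX1b, h']
        rw [hPr, hPr1]; exact X1.prop r
      · rcases lt_or_ge r (j + n + 1) with hc2 | hc2
        · have hPr : P r = x.val (r - j) := by
            simp only [hP]; rw [if_neg (by omega), if_pos (by omega)]
          have hPr1 : P (r + 1) = x.val (r - j + 1) := by
            simp only [hP]
            rw [if_neg (by omega), if_pos (by omega), show r + 1 - j = r - j + 1 by omega]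
          rw [hPr, hPr1]; exact x.prop (r - j)
        · have hPr : P r = X2.val (r - (j + n + 1)) := by
            by_cases h : r = j + n + 1
            · simp only [hP]
              rw [if_neg (by omega), if_pos (by omega), show r - j = n + 1 by omega,
                show r - (j + n + 1) = 0 by omega]
              exact hX2b.symm
            · simp only [hP]; rw [if_neg (by omega), if_neg (by omega)]
          have hPr1 : P (r + 1) = X2.val (r - (j + n + 1) + 1) := by
            simp only [hP]
            rw [if_neg (by omega), if_neg (by omega),
              show r + 1 - (j + n + 1) = r - (j + n + 1) + 1 by omega]
          rw [hPr, hPr1]; exact X2.prop _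
  refine ⟨⟨fun i => P (i % m), ?_⟩, ?_, ?_⟩
  · intro i
    have h2 : (i % m + 1) % m = (i + 1) % m := Nat.mod_add_mod i m 1
    have h3 := hstep (i % m) (Nat.mod_lt _ hm0)
    rwa [h2] at h3
  · apply Subtype.ext
    funext i
    rw [iterate_val]
    show P ((i + m) % m) = P (i % m)
    rw [Nat.add_mod_right]
  · intro i hi
    show P (i % m) = _
    rw [Nat.mod_eq_of_lt hi]

lemma ereal_inv_mul_lt {x : EReal} {c : ℝ} {i : ℕ} (hi : 1 ≤ i)
    (h : (((i : ℝ)⁻¹ : ℝ) : EReal) * x < (c : EReal)) : x ≤ ((i * c : ℝ) : EReal) := by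
  have hipos : (0 : ℝ) < (i : ℝ) := by exact_mod_cast hi
  induction x using EReal.rec with
  | bot => exact bot_le
  | top =>
    rw [EReal.coe_mul_top_of_pos (by positivity)] at h
    exact absurd h (by simp)
  | coe y =>
    rw [← EReal.coe_mul] at h
    have h2 := EReal.coe_lt_coe_iff.mp h
    refine EReal.coe_le_coe_iff.mpr ?_
    have h3 : y = (i : ℝ) * ((i : ℝ)⁻¹ * y) := by field_simp
    rw [h3]
    calc (i : ℝ) * ((i : ℝ)⁻¹ * y) ≤ (i : ℝ) * c :=
      mul_le_mul_of_nonneg_left h2.le hipos.le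
    _ = i * c := rfl


set_option maxHeartbeats 2000000 in
/-- for a transitive finite-entropy CMS and a bounded summable-variations
potential vanishing at infinity, `P_G(φ) ≥ δ_∞`. -/
theorem deltaInf_le_pressure (Mtr : ℕ → ℕ → Prop) (hT : IsTransitive Mtr)
    (hfin : topEnt Mtr < ⊤) (φ : Shift Mtr → ℝ)
    (hb : ∃ C : ℝ, ∀ x, |φ x| ≤ C) (hv : SummableVars Mtr φ)
    (hvanish : Tendsto (fun m : ℕ => sSup {r : ℝ | ∃ x : Shift Mtr, x.val 0 = m ∧ r = |φ x|})
      atTop (𝓝 0)) :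
    ∀ a : ℕ, (∃ x : Shift Mtr, x.val 0 = a) → deltaInf Mtr ≤ pressure Mtr φ a := by
  intro a ha
  by_contra hcon
  push_neg at hcon
  obtain ⟨t, hpt, htd⟩ := EReal.exists_between_coe_real hcon
  obtain ⟨r, hpr, hrt'⟩ := EReal.exists_between_coe_real hpt
  have hrt : r < t := EReal.coe_lt_coe_iff.mp hrt'
  set ε := (t - r) / 3 with hεdef
  have hεpos : 0 < ε := by rw [hεdef]; linarith
  have hrte : r + 3 * ε = t := by rw [hεdef]; ring
  obtain ⟨C, hC⟩ := hb
  set c0 := max C 0 with hc0def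
  have hc0 : ∀ x : Shift Mtr, |φ x| ≤ c0 := fun x => (hC x).trans (le_max_left _ _)
  have hc00 : 0 ≤ c0 := le_max_right _ _
  set s : ℕ → ℝ := fun b => sSup {r : ℝ | ∃ x : Shift Mtr, x.val 0 = b ∧ r = |φ x|} with hsdef
  have hsle : ∀ x : Shift Mtr, |φ x| ≤ s (x.val 0) := by
    intro x
    apply le_csSup
    · exact ⟨c0, by rintro u ⟨y, -, rfl⟩; exact hc0 y⟩
    · exact ⟨x, rfl, rfl⟩
  obtain ⟨q, hq⟩ := eventually_atTop.mp (hvanish.eventually_le_const hεpos)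
  set M := ⌈c0 / ε⌉₊ + 1 with hMdef
  have hMε : c0 ≤ (M : ℝ) * ε := by
    have h1 : c0 / ε ≤ (M : ℝ) := by
      refine le_trans (Nat.le_ceil _) ?_
      exact_mod_cast Nat.le_succ _
    calc c0 = (c0 / ε) * ε := by field_simp
    _ ≤ (M : ℝ) * ε := mul_le_mul_of_nonneg_right h1 hεpos.le
  have hNE : Nonempty (Shift Mtr) := ⟨ha.choose⟩
  choose! X1 l1 hl1pos hX1a hX1b using fun b (hbb : ∃ x : Shift Mtr, x.val 0 = b) => hT a b ha hbb
  choose! X2 l2 hl2pos hX2b hX2a using fun b (hbb : ∃ x : Shift Mtr, x.val 0 = b) => hT b a hbb ha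
  set L := max 1 ((Finset.range (q + 1)).sup fun b => max (l1 b) (l2 b)) with hLdef
  have hL1 : 1 ≤ L := le_max_left _ _
  have hLl1 : ∀ b, b ≤ q → l1 b ≤ L := by
    intro b hbq
    refine le_trans (le_trans (le_max_left _ _)
      (Finset.le_sup (f := fun b => max (l1 b) (l2 b)) (Finset.mem_range.mpr (by omega))))
      (le_max_right _ _)
  have hLl2 : ∀ b, b ≤ q → l2 b ≤ L := by
    intro b hbq
    refine le_trans (le_trans (le_max_right _ _)
      (Finset.le_sup (f := fun b => max (l1 b) (l2 b)) (Finset.mem_range.mpr (by omega))))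
      (le_max_right _ _)
  -- Step 1: counting estimate
  have hstep1 : ∀ n : ℕ, zCount Mtr q M n ≤
      ∑ jk ∈ Finset.Icc 1 L ×ˢ Finset.Icc 1 L,
        Zab Mtr φ a (n + 1 + jk.1 + jk.2) *
          ENNReal.ofReal (Real.exp (2 * L * c0 + 2 * (n + 1 + jk.1 + jk.2) * ε)) := by
    intro n
    classical
    set S : Set (Fin (n + 2) → ℕ) := {w | (∃ x : Shift Mtr, ∀ i : Fin (n + 2), x.val i = w i) ∧
      w 0 ≤ q ∧ w (Fin.last (n + 1)) ≤ q ∧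
      M * ({i : Fin (n + 2) | w i ≤ q}).ncard ≤ n + 2} with hSdef
    set cls : ℕ × ℕ → Set (Fin (n + 2) → ℕ) := fun jk =>
      {w | w ∈ S ∧ l1 (w 0) = jk.1 ∧ l2 (w (Fin.last (n + 1))) = jk.2} with hclsdef
    have hreal : ∀ w : Fin (n + 2) → ℕ, w ∈ S →
        (∃ y : Shift Mtr, y.val 0 = w 0) ∧ (∃ y : Shift Mtr, y.val 0 = w (Fin.last (n + 1))) := by
      rintro w ⟨⟨x, hx⟩, -, -, -⟩
      constructor
      · exact ⟨x, by simpa using hx 0⟩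
      · refine ⟨(shiftMap Mtr)^[n + 1] x, ?_⟩
        rw [iterate_val, Nat.zero_add]
        simpa using hx (Fin.last (n + 1))
    have hcover : S ⊆ ⋃ jk ∈ Finset.Icc 1 L ×ˢ Finset.Icc 1 L, cls jk := by
      intro w hw
      obtain ⟨h1, h2⟩ := hreal w hw
      have hw' := hw
      obtain ⟨-, hw0, hwl, -⟩ := hw'
      refine Set.mem_iUnion.mpr ⟨(l1 (w 0), l2 (w (Fin.last (n + 1)))),
        Set.mem_iUnion.mpr ⟨?_, ⟨hw, rfl, rfl⟩⟩⟩
      simp only [Finset.mem_product, Finset.mem_Icc]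
      exact ⟨⟨hl1pos _ h1, hLl1 _ hw0⟩, hl2pos _ h2, hLl2 _ hwl⟩
    have hclass : ∀ jk ∈ Finset.Icc 1 L ×ˢ Finset.Icc 1 L,
        (((cls jk).encard : ℕ∞) : ℝ≥0∞) ≤ Zab Mtr φ a (n + 1 + jk.1 + jk.2) *
          ENNReal.ofReal (Real.exp (2 * L * c0 + 2 * (n + 1 + jk.1 + jk.2) * ε)) := by
      rintro ⟨j, k⟩ -
      set m' := n + 1 + j + k with hm'def
      have hF : ∀ w : ↥(cls (j, k)),
          ∃ p : {y : Shift Mtr // (shiftMap Mtr)^[m'] y = y ∧ y.val 0 = a},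
            (∀ i (hi : i < n + 2), p.val.val (j + i) = w.val ⟨i, hi⟩) ∧
            ENNReal.ofReal (Real.exp (-(2 * (L : ℝ) * c0 + 2 * (m' : ℝ) * ε))) ≤
              ENNReal.ofReal (Real.exp (birk Mtr φ m' p.val)) := by
        intro w
        obtain ⟨hwS, hj', hk'⟩ := w.prop
        replace hj' : l1 (w.val 0) = j := hj'
        replace hk' : l2 (w.val (Fin.last (n + 1))) = k := hk'
        obtain ⟨⟨x, hx⟩, hw0, hwl, hcard⟩ := hwS
        have hx0 : x.val 0 = w.val 0 := by simpa using hx 0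
        have hxl : x.val (n + 1) = w.val (Fin.last (n + 1)) := by
          simpa using hx (Fin.last (n + 1))
        have hreal0 : ∃ y : Shift Mtr, y.val 0 = w.val 0 := ⟨x, hx0⟩
        have hreall : ∃ y : Shift Mtr, y.val 0 = w.val (Fin.last (n + 1)) :=
          ⟨(shiftMap Mtr)^[n + 1] x, by rw [iterate_val, Nat.zero_add]; exact hxl⟩
        have hjpos : 0 < j := hj' ▸ hl1pos _ hreal0
        have hkpos : 0 < k := hk' ▸ hl2pos _ hreall
        have hjL : j ≤ L := hj' ▸ hLl1 _ hw0
        have hkL : k ≤ L := hk' ▸ hLl2 _ hwl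
        have hX1b' : (X1 (w.val 0)).val j = x.val 0 :=
          (hj' ▸ hX1b _ hreal0).trans hx0.symm
        have hX2b' : (X2 (w.val (Fin.last (n + 1)))).val 0 = x.val (n + 1) := by
          rw [hX2b _ hreall]; exact hxl.symm
        have hX2a' : (X2 (w.val (Fin.last (n + 1)))).val k = a := by
          have h := hX2a _ hreall
          rw [hk'] at h
          exact h
        obtain ⟨p, hper, hdesc⟩ := glue Mtr hjpos hkpos hm'def (X1 (w.val 0))
          (X2 (w.val (Fin.last (n + 1)))) x (hX1a _ hreal0) hX1b' hX2b' hX2a'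
        have hp0 : p.val 0 = a := by
          rw [hdesc 0 (by omega), if_pos hjpos]; exact hX1a _ hreal0
        refine ⟨⟨p, hper, hp0⟩, ?_, ?_⟩
        · intro i hi
          rw [hdesc (j + i) (by omega), if_neg (by omega), if_pos (by omega),
            show j + i - j = i by omega]
          exact hx ⟨i, hi⟩
        · apply ENNReal.ofReal_le_ofReal
          apply Real.exp_le_exp.mpr
          have hterm : ∀ i ∈ Finset.range m',
              -(if p.val i ≤ q then c0 else ε) ≤ φ ((shiftMap Mtr)^[i] p) := by
            intro i _
            have h0 : ((shiftMap Mtr)^[i] p).val 0 = p.val i := by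
              rw [iterate_val, Nat.zero_add]
            have habs : |φ ((shiftMap Mtr)^[i] p)| ≤ s (p.val i) := by
              rw [← h0]; exact hsle _
            by_cases hpq : p.val i ≤ q
            · rw [if_pos hpq]
              have := hc0 ((shiftMap Mtr)^[i] p)
              linarith [neg_abs_le (φ ((shiftMap Mtr)^[i] p))]
            · rw [if_neg hpq]
              have hsq : s (p.val i) ≤ ε := hq _ (by omega)
              linarith [neg_abs_le (φ ((shiftMap Mtr)^[i] p))]
          have h1 : ∑ i ∈ Finset.range m', -(if p.val i ≤ q then c0 else ε) ≤
              birk Mtr φ m' p := Finset.sum_le_sum hterm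
          rw [Finset.sum_neg_distrib] at h1
          set A := (Finset.range m').filter (fun i => p.val i ≤ q) with hAdef
          have hsplit : ∑ i ∈ Finset.range m', (if p.val i ≤ q then c0 else ε) ≤
              A.card * c0 + m' * ε := by
            calc ∑ i ∈ Finset.range m', (if p.val i ≤ q then c0 else ε)
                ≤ ∑ i ∈ Finset.range m', ((if p.val i ≤ q then c0 else 0) + ε) := by
                  refine Finset.sum_le_sum fun i _ => ?_
                  by_cases hpq : p.val i ≤ q
                  · simp [hpq]; linarith
                  · simp [hpq]
              _ = (∑ i ∈ Finset.range m', (if p.val i ≤ q then c0 else 0)) + m' * ε := by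
                  rw [Finset.sum_add_distrib, Finset.sum_const, Finset.card_range,
                    nsmul_eq_mul]
              _ = A.card * c0 + m' * ε := by
                  rw [hAdef, ← Finset.sum_filter, Finset.sum_const, nsmul_eq_mul]
          set B := (Finset.univ.filter (fun i : Fin (n + 2) => w.val i ≤ q)).card with hBdef
          have hA : A.card ≤ j + B + (k - 1) := by
            have hsub : A ⊆ ((Finset.range j).filter (fun i => p.val i ≤ q)) ∪
                ((Finset.Ico j (j + n + 2)).filter (fun i => p.val i ≤ q)) ∪
                ((Finset.Ico (j + n + 2) m').filter (fun i => p.val i ≤ q)) := by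
              intro i hi
              simp only [hAdef, Finset.mem_filter, Finset.mem_range, Finset.mem_union,
                Finset.mem_Ico] at hi ⊢
              omega
            have h2 := le_trans (Finset.card_le_card hsub)
              (le_trans (Finset.card_union_le _ _)
                (add_le_add_left (Finset.card_union_le _ _) _))
            have hb1 : ((Finset.range j).filter (fun i => p.val i ≤ q)).card ≤ j :=
              le_trans (Finset.card_filter_le _ _) (le_of_eq (Finset.card_range j))
            have hb3 : ((Finset.Ico (j + n + 2) m').filter (fun i => p.val i ≤ q)).card ≤
                k - 1 := by
              refine le_trans (Finset.card_filter_le _ _) ?_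
              rw [Nat.card_Ico]; omega
            have hb2 : ((Finset.Ico j (j + n + 2)).filter (fun i => p.val i ≤ q)).card ≤ B := by
              refine Finset.card_le_card_of_injOn
                (fun i => ⟨(i - j) % (n + 2), Nat.mod_lt _ (by omega)⟩) ?_ ?_
              · intro i hi
                simp only [Finset.mem_coe, Finset.mem_filter, Finset.mem_Ico] at hi
                obtain ⟨⟨hij, hij2⟩, hiq⟩ := hi
                have hieq : (i - j) % (n + 2) = i - j := Nat.mod_eq_of_lt (by omega)
                have hpv : p.val i = x.val (i - j) := by
                  rw [hdesc i (by omega), if_neg (by omega), if_pos (by omega)]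
                have hxw := hx ⟨(i - j) % (n + 2), Nat.mod_lt _ (by omega)⟩
                simp only [hBdef, Finset.mem_coe, Finset.mem_filter, Finset.mem_univ, true_and]
                rw [← hxw]
                show x.val ((i - j) % (n + 2)) ≤ q
                rw [hieq, ← hpv]; exact hiq
              · intro i hi i' hi' hii
                simp only [Finset.mem_coe, Finset.mem_filter, Finset.mem_Ico] at hi hi'
                have h5 : (i - j) % (n + 2) = (i' - j) % (n + 2) := by
                  simpa using congrArg Fin.val hii
                rw [Nat.mod_eq_of_lt (by omega), Nat.mod_eq_of_lt (by omega)] at h5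
                omega
            omega
          have hncard : ({i : Fin (n + 2) | w.val i ≤ q}).ncard = B := by
            rw [Set.ncard_eq_toFinset_card']
            congr 1
            ext i
            simp
          have hBn : M * B ≤ n + 2 := by rw [← hncard]; exact hcard
          have hBc : (B : ℝ) * c0 ≤ ((n : ℝ) + 2) * ε := by
            have h6 : (M : ℝ) * (B : ℝ) ≤ (n : ℝ) + 2 := by exact_mod_cast hBn
            have h7 : (B : ℝ) * c0 ≤ (B : ℝ) * ((M : ℝ) * ε) :=
              mul_le_mul_of_nonneg_left hMε (Nat.cast_nonneg _)
            have h8 : (B : ℝ) * ((M : ℝ) * ε) = ((M : ℝ) * (B : ℝ)) * ε := by ring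
            have h9 : ((M : ℝ) * (B : ℝ)) * ε ≤ ((n : ℝ) + 2) * ε :=
              mul_le_mul_of_nonneg_right h6 hεpos.le
            linarith
          have hAc : (A.card : ℝ) ≤ (j : ℝ) + (B : ℝ) + ((k : ℝ) - 1) := by
            have := hA
            have h := (Nat.cast_le (α := ℝ)).mpr hA
            push_cast [Nat.cast_sub hkpos] at h
            linarith
          have hm'n : ((n : ℝ) + 2) ≤ (m' : ℝ) := by
            have : n + 2 ≤ m' := by omega
            exact_mod_cast this
          have hjLr : (j : ℝ) ≤ (L : ℝ) := by exact_mod_cast hjL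
          have hkLr : (k : ℝ) ≤ (L : ℝ) := by exact_mod_cast hkL
          have hAcc : (A.card : ℝ) * c0 ≤ ((j : ℝ) + (B : ℝ) + ((k : ℝ) - 1)) * c0 :=
            mul_le_mul_of_nonneg_right hAc hc00
          have hfin : ∑ i ∈ Finset.range m', (if p.val i ≤ q then c0 else ε) ≤
              2 * (L : ℝ) * c0 + 2 * (m' : ℝ) * ε := by
            have hεm : ((n : ℝ) + 2) * ε ≤ (m' : ℝ) * ε :=
              mul_le_mul_of_nonneg_right hm'n hεpos.le
            nlinarith [hsplit, hAcc, hBc, hc00, hεpos.le]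
          linarith
      choose FF hmid hbnd using hF
      have hinj : Function.Injective FF := by
        intro w w' hww
        apply Subtype.ext
        funext i
        have e1 := hmid w i.val i.isLt
        have e2 := hmid w' i.val i.isLt
        rw [hww] at e1
        have h3 : w.val ⟨i.val, i.isLt⟩ = w'.val ⟨i.val, i.isLt⟩ := e1.symm.trans e2
        simpa using h3
      have hmain := encard_mul_le_tsum (cls (j, k))
        (fun y : {y : Shift Mtr // (shiftMap Mtr)^[m'] y = y ∧ y.val 0 = a} =>
          ENNReal.ofReal (Real.exp (birk Mtr φ m' y.val)))
        (ENNReal.ofReal (Real.exp (-(2 * (L : ℝ) * c0 + 2 * (m' : ℝ) * ε)))) FF hinj hbnd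
      have hZ : (∑' y : {y : Shift Mtr // (shiftMap Mtr)^[m'] y = y ∧ y.val 0 = a},
          ENNReal.ofReal (Real.exp (birk Mtr φ m' y.val))) = Zab Mtr φ a m' := rfl
      rw [hZ] at hmain
      have hc0' : ENNReal.ofReal (Real.exp (-(2 * (L : ℝ) * c0 + 2 * (m' : ℝ) * ε))) ≠ 0 := by
        simp [ENNReal.ofReal_eq_zero, not_le, Real.exp_pos]
      have hinv : (ENNReal.ofReal (Real.exp (-(2 * (L : ℝ) * c0 + 2 * (m' : ℝ) * ε))))⁻¹ =
          ENNReal.ofReal (Real.exp (2 * (L : ℝ) * c0 + 2 * (m' : ℝ) * ε)) := by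
        rw [← ENNReal.ofReal_inv_of_pos (Real.exp_pos _), ← Real.exp_neg, neg_neg]
      have hdiv := (ENNReal.le_div_iff_mul_le (Or.inl hc0')
        (Or.inl ENNReal.ofReal_ne_top)).mpr hmain
      rw [div_eq_mul_inv, hinv] at hdiv
      refine le_trans hdiv (le_of_eq ?_)
      congr 3
      push_cast [hm'def]
      ring
    calc zCount Mtr q M n = ((S.encard : ℕ∞) : ℝ≥0∞) := rfl
      _ ≤ (((⋃ jk ∈ Finset.Icc 1 L ×ˢ Finset.Icc 1 L, cls jk).encard : ℕ∞) : ℝ≥0∞) :=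
          ENat.toENNReal_le.mpr (Set.encard_mono hcover)
      _ ≤ ∑ jk ∈ Finset.Icc 1 L ×ˢ Finset.Icc 1 L, (((cls jk).encard : ℕ∞) : ℝ≥0∞) :=
          encard_biUnion_le' _ _
      _ ≤ _ := Finset.sum_le_sum hclass
  -- Step 2: eventual bound on Zab
  have hZev : ∀ᶠ (i : ℕ) in atTop,
      (((i : ℝ)⁻¹ : ℝ) : EReal) * ENNReal.log (Zab Mtr φ a i) < (r : EReal) :=
    eventually_lt_of_limsup_lt hpr
  obtain ⟨N, hN⟩ := eventually_atTop.mp hZev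
  have hZb : ∀ i, max N 1 ≤ i → Zab Mtr φ a i ≤ ENNReal.ofReal (Real.exp (i * r)) := by
    intro i hi
    have h1 := hN i (le_trans (le_max_left _ _) hi)
    have hi1 : (1 : ℕ) ≤ i := le_trans (le_max_right _ _) hi
    have h2 : ENNReal.log (Zab Mtr φ a i) ≤ ((i * r : ℝ) : EReal) := ereal_inv_mul_lt hi1 h1
    have h3 : ENNReal.log (Zab Mtr φ a i) ≤ ENNReal.log (ENNReal.ofReal (Real.exp (i * r))) := by
      rw [ENNReal.log_ofReal_of_pos (Real.exp_pos _), Real.log_exp]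
      exact h2
    exact ENNReal.log_le_log_iff.mp h3
  -- Step 3: combine
  set K : ℝ := (1 + 2 * L) * |r| + 2 * L * c0 + 2 * (1 + 2 * L) * ε with hKdef
  have hzle : ∀ n, max N 1 ≤ n → zCount Mtr q M n ≤
      ENNReal.ofReal ((L * L : ℕ) * Real.exp (n * (r + 2 * ε) + K)) := by
    intro n hn
    refine le_trans (hstep1 n) ?_
    have hterm : ∀ jk ∈ Finset.Icc 1 L ×ˢ Finset.Icc 1 L,
        Zab Mtr φ a (n + 1 + jk.1 + jk.2) *
          ENNReal.ofReal (Real.exp (2 * L * c0 + 2 * (n + 1 + jk.1 + jk.2) * ε)) ≤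
        ENNReal.ofReal (Real.exp (n * (r + 2 * ε) + K)) := by
      rintro ⟨j, k⟩ hjk
      simp only [Finset.mem_product, Finset.mem_Icc] at hjk
      obtain ⟨⟨hj1, hjL⟩, hk1, hkL⟩ := hjk
      have hm'N : max N 1 ≤ n + 1 + j + k := le_trans hn (by omega)
      have h1 : Zab Mtr φ a (n + 1 + j + k) ≤
          ENNReal.ofReal (Real.exp ((n + 1 + j + k : ℕ) * r)) := hZb _ hm'N
      calc Zab Mtr φ a (n + 1 + j + k) *
            ENNReal.ofReal (Real.exp (2 * L * c0 + 2 * ((n : ℝ) + 1 + j + k) * ε))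
          ≤ ENNReal.ofReal (Real.exp ((n + 1 + j + k : ℕ) * r)) *
            ENNReal.ofReal (Real.exp (2 * L * c0 + 2 * ((n : ℝ) + 1 + j + k) * ε)) :=
            mul_le_mul_left h1 _
        _ = ENNReal.ofReal (Real.exp ((n + 1 + j + k : ℕ) * r +
            (2 * L * c0 + 2 * ((n : ℝ) + 1 + j + k) * ε))) := by
            rw [← ENNReal.ofReal_mul (Real.exp_nonneg _), ← Real.exp_add]
        _ ≤ ENNReal.ofReal (Real.exp (n * (r + 2 * ε) + K)) := by
            apply ENNReal.ofReal_le_ofReal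
            apply Real.exp_le_exp.mpr
            have hjr : (j : ℝ) ≤ (L : ℝ) := by exact_mod_cast hjL
            have hkr : (k : ℝ) ≤ (L : ℝ) := by exact_mod_cast hkL
            have hjk2 : ((1 : ℝ) + j + k) ≤ 1 + 2 * L := by linarith
            have habs : ((1 : ℝ) + j + k) * r ≤ (1 + 2 * L) * |r| := by
              calc ((1 : ℝ) + j + k) * r ≤ ((1 : ℝ) + j + k) * |r| :=
                mul_le_mul_of_nonneg_left (le_abs_self r) (by positivity)
              _ ≤ (1 + 2 * L) * |r| := mul_le_mul_of_nonneg_right hjk2 (abs_nonneg r)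
            have hcast : ((n + 1 + j + k : ℕ) : ℝ) = (n : ℝ) + (1 + j + k) := by
              push_cast; ring
            rw [hKdef, hcast]
            nlinarith [hεpos.le]
    calc ∑ jk ∈ Finset.Icc 1 L ×ˢ Finset.Icc 1 L,
          Zab Mtr φ a (n + 1 + jk.1 + jk.2) *
            ENNReal.ofReal (Real.exp (2 * L * c0 + 2 * (n + 1 + jk.1 + jk.2) * ε))
        ≤ ∑ _jk ∈ Finset.Icc 1 L ×ˢ Finset.Icc 1 L,
            ENNReal.ofReal (Real.exp (n * (r + 2 * ε) + K)) := Finset.sum_le_sum hterm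
      _ = ((Finset.Icc 1 L ×ˢ Finset.Icc 1 L).card : ℝ≥0∞) *
            ENNReal.ofReal (Real.exp (n * (r + 2 * ε) + K)) := by
          rw [Finset.sum_const, nsmul_eq_mul]
      _ = ENNReal.ofReal ((L * L : ℕ) * Real.exp (n * (r + 2 * ε) + K)) := by
          rw [Finset.card_product, Nat.card_Icc, Nat.add_sub_cancel,
            ← ENNReal.ofReal_natCast, ← ENNReal.ofReal_mul (by positivity)]
  -- Step 4: absorb constants
  set K2 : ℝ := Real.log ((L * L : ℕ) * Real.exp K) with hK2def
  have hfinal : ∀ n, max (max N 1) (⌈K2 / ε⌉₊) ≤ n →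
      zCount Mtr q M n ≤ ENNReal.ofReal (Real.exp (n * t)) := by
    intro n hn
    refine le_trans (hzle n (le_trans (le_max_left _ _) hn)) (ENNReal.ofReal_le_ofReal ?_)
    have hLL : (0 : ℝ) < (L * L : ℕ) := by
      have : 1 ≤ L * L := Nat.one_le_iff_ne_zero.mpr (by positivity)
      exact_mod_cast this
    have hn2 : K2 / ε ≤ (n : ℝ) := le_trans (Nat.le_ceil _)
      (by exact_mod_cast le_trans (le_max_right _ _) hn)
    have hK2n : K2 ≤ n * ε := by
      rw [div_le_iff₀ hεpos] at hn2
      linarith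
    have hexp : (L * L : ℕ) * Real.exp K ≤ Real.exp (n * ε) := by
      rw [← Real.exp_log (by positivity : (0:ℝ) < (L * L : ℕ) * Real.exp K)]
      exact Real.exp_le_exp.mpr (le_trans (le_of_eq hK2def.symm) hK2n)
    calc (L * L : ℕ) * Real.exp (n * (r + 2 * ε) + K)
        = ((L * L : ℕ) * Real.exp K) * Real.exp (n * (r + 2 * ε)) := by
          rw [Real.exp_add]; ring
      _ ≤ Real.exp (n * ε) * Real.exp (n * (r + 2 * ε)) :=
          mul_le_mul_of_nonneg_right hexp (Real.exp_nonneg _)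
      _ = Real.exp (n * t) := by
          rw [← Real.exp_add]
          congr 1
          rw [← hrte]; ring
  -- Step 5: conclude
  have hkey : deltaMQ Mtr M q ≤ (t : EReal) := by
    unfold deltaMQ growthSup
    refine limsup_le_of_le (by isBoundedDefault) ?_
    filter_upwards [eventually_ge_atTop (max (max (max N 1) (⌈K2 / ε⌉₊)) 1)] with n hn
    have hn1 : (1 : ℕ) ≤ n := le_trans (le_max_right _ _) hn
    have hnpos : (0 : ℝ) < (n : ℝ) := by exact_mod_cast hn1
    have h1 : ENNReal.log (zCount Mtr q M n) ≤ ((n * t : ℝ) : EReal) := by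
      refine le_trans (ENNReal.log_le_log_iff.mpr (hfinal n (le_trans (le_max_left _ _) hn))) ?_
      rw [ENNReal.log_ofReal_of_pos (Real.exp_pos _), Real.log_exp]
    calc (((n : ℝ)⁻¹ : ℝ) : EReal) * ENNReal.log (zCount Mtr q M n)
        ≤ (((n : ℝ)⁻¹ : ℝ) : EReal) * ((n * t : ℝ) : EReal) :=
          mul_le_mul_of_nonneg_left h1 (EReal.coe_nonneg.mpr (by positivity))
      _ = ((t : ℝ) : EReal) := by
          rw [← EReal.coe_mul]
          congr 1
          field_simp
  have hle : deltaInf Mtr ≤ (t : EReal) :=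
    le_trans (le_trans (iInf_le _ M) (iInf_le _ q)) hkey
  exact absurd htd (not_lt.mpr hle)


end CMSPaper
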